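/- Let m > 0, t₀ ∈ ℝ, and u ∈ ℝ³ with ‖u‖ = 1. Define γ(ρ) := (t₀ + ρ − 2m·log(1 + ρ/(2m)), ρ·u) for ρ ∈ (0, ∞). Then for every ρ > 0 the velocity γ'(ρ) = (ρ/(ρ + 2m), u) satisfies Q_N(ρ/(ρ + 2m), u, ρ·u) = 0; i.e., the radial curves with dt/dρ = ρ/(ρ + 2m) are null curves of the negative-mass Schwarzschild metric. -/

import Mathlib

/-- The negative-mass Schwarzschild quadratic form with mass parameter `m > 0`,
evaluated on a velocity `(t', x')` at a point with spatial part `x ≠ 0`: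
`Q_N(t',x',x) := −(1 + 2m/‖x‖)·t'² + ‖x'‖² − (2m/((‖x‖ + 2m)·‖x‖²))·⟨x,x'⟩²`. -/
noncomputable def QN (m : ℝ) (t' : ℝ) (x' x : EuclideanSpace ℝ (Fin 3)) : ℝ :=
  -(1 + 2 * m / ‖x‖) * t' ^ 2 + ‖x'‖ ^ 2
    - (2 * m / ((‖x‖ + 2 * m) * ‖x‖ ^ 2)) * (inner ℝ x x' : ℝ) ^ 2

/-- Let `m > 0`, `t₀ ∈ ℝ`, and `u ∈ ℝ³` with `‖u‖ = 1`. Define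
`γ(ρ) := (t₀ + ρ − 2m·log(1 + ρ/(2m)), ρ·u)` for `ρ ∈ (0, ∞)`. Then for every
`ρ > 0` the velocity `γ'(ρ) = (ρ/(ρ + 2m), u)` satisfies
`Q_N(ρ/(ρ + 2m), u, ρ·u) = 0`; i.e., the radial curves with `dt/dρ = ρ/(ρ + 2m)`
are null curves of the negative-mass Schwarzschild metric. -/
theorem radial_null_curves_negative_mass (m : ℝ) (hm : 0 < m) (t₀ : ℝ)
    (u : EuclideanSpace ℝ (Fin 3)) (hu : ‖u‖ = 1)
    (ρ : ℝ) (hρ : 0 < ρ) :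
    HasDerivAt
      (fun σ : ℝ => ((t₀ + σ - 2 * m * Real.log (1 + σ / (2 * m)), σ • u) :
        ℝ × EuclideanSpace ℝ (Fin 3)))
      (ρ / (ρ + 2 * m), u) ρ ∧
    QN m (ρ / (ρ + 2 * m)) u (ρ • u) = 0 := by
  have h2m : (2 : ℝ) * m ≠ 0 := by positivity
  have hsum : ρ + 2 * m ≠ 0 := by positivity
  constructor
  · apply HasDerivAt.prodMk
    · have harg : (1 : ℝ) + ρ / (2 * m) ≠ 0 := by positivity
      have h1 : HasDerivAt (fun σ : ℝ => 1 + σ / (2 * m)) (1 / (2 * m)) ρ := by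
        simpa using ((hasDerivAt_id ρ).div_const (2 * m)).const_add 1
      have hlog : HasDerivAt (fun σ : ℝ => Real.log (1 + σ / (2 * m)))
          ((1 / (2 * m)) / (1 + ρ / (2 * m))) ρ := h1.log harg
      have := ((hasDerivAt_id ρ).const_add t₀).sub (hlog.const_mul (2 * m))
      convert this using 1
      field_simp
      · rfl
      · field_simp
        ring
    · simpa using (hasDerivAt_id ρ).smul_const u
  · have hn : ‖ρ • u‖ = ρ := by
      rw [norm_smul, hu, Real.norm_eq_abs, abs_of_pos hρ, mul_one]
    have hip : (inner ℝ (ρ • u) u : ℝ) = ρ := by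
      rw [real_inner_smul_left, real_inner_self_eq_norm_sq, hu]; ring
    rw [QN, hn, hip, hu]
    field_simp
    ring
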